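/- Let λ₁, …, λ_{2g+2} be pairwise distinct complex numbers and I ⊆ {1,…,2g+2} with |I| ≥ g+1. Define the polynomial H_I(x) = ∏_{j∈I^c}(x−λⱼ) · Σ_{j∈I^c} 1/(x−λⱼ) (a genuine polynomial) and for s ∈ I set h_{I;s}(x) = ( ∏_{j∈I^c}(x−λⱼ) − ∏_{j∈I^c}(λ_s−λⱼ) ) / (x−λ_s), which is a polynomial since x = λ_s is a root of the numerator. Then the polynomial H_I(x) − Σ_{i∈I} h_{I;i}(x) has degree at most g − 1. -/

import Mathlib

open Polynomial

private lemma coeff_of_monic' {p : ℂ[X]} (hp : p.Monic) (d n : ℕ) (hd : p.natDegree = d)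
    (hn : d ≤ n) : p.coeff n = if n = d then 1 else 0 := by
  rcases eq_or_lt_of_le hn with h | h
  · rw [if_pos h.symm, ← h, ← hd, hp.coeff_natDegree]
  · rw [if_neg (by omega), coeff_eq_zero_of_natDegree_lt (by omega)]

theorem stmt4 (g : ℕ) (lam : Fin (2 * g + 2) → ℂ) (hlam : Function.Injective lam)
    (I : Finset (Fin (2 * g + 2))) (hI : g + 1 ≤ I.card) :
    ((∑ s ∈ Iᶜ, ∏ j ∈ Iᶜ.erase s, (X - C (lam j))) -
      ∑ i ∈ I, ((∏ j ∈ Iᶜ, (X - C (lam j)) - C (∏ j ∈ Iᶜ, (lam i - lam j)))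
          /ₘ (X - C (lam i)))).degree < (g : WithBot ℕ) := by
  set m := Iᶜ.card with hm
  have hcard : I.card + m = 2 * g + 2 := by
    rw [hm]; simpa using Finset.card_add_card_compl I
  have hIcard : I.card ≤ 2 * g + 2 := Finset.card_le_card (Finset.subset_univ I) |>.trans
    (by simp)
  have hmle : m ≤ g + 1 := by omega
  set P : ℂ[X] := ∏ j ∈ Iᶜ, (X - C (lam j)) with hP
  have hPmonic : P.Monic := monic_prod_of_monic _ _ fun j _ => monic_X_sub_C _
  have hPdeg : P.natDegree = m := by
    rw [hP, natDegree_prod_of_monic _ _ fun j _ => monic_X_sub_C _]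
    simp [hm]
  rcases Nat.eq_zero_or_pos m with hm0 | hm1
  · -- Iᶜ is empty
    have hIc : Iᶜ = (∅ : Finset (Fin (2 * g + 2))) := Finset.card_eq_zero.mp hm0
    have hP1 : P = 1 := by rw [hP, hIc, Finset.prod_empty]
    simp only [hIc, hP1, Finset.sum_empty, Finset.prod_empty, map_one, sub_self, zero_sub,
      Polynomial.zero_divByMonic, Finset.sum_const, smul_zero, neg_zero, degree_zero]
    exact WithBot.bot_lt_coe g
  · rw [Polynomial.degree_lt_iff_coeff_zero]
    intro n hn
    rw [coeff_sub, finset_sum_coeff, finset_sum_coeff]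
    have key1 : ∀ s ∈ Iᶜ, (∏ j ∈ Iᶜ.erase s, (X - C (lam j))).coeff n
        = if n = m - 1 then 1 else 0 := by
      intro s hs
      refine coeff_of_monic' (monic_prod_of_monic _ _ fun j _ => monic_X_sub_C _) _ n ?_
        (by omega)
      rw [natDegree_prod_of_monic _ _ fun j _ => monic_X_sub_C _]
      simp [Finset.card_erase_of_mem hs, hm]
    have key2 : ∀ i ∈ I, ((P - C (∏ j ∈ Iᶜ, (lam i - lam j))) /ₘ (X - C (lam i))).coeff n
        = if n = m - 1 then 1 else 0 := by
      intro i hi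
      set c : ℂ := ∏ j ∈ Iᶜ, (lam i - lam j) with hc
      have hceval : c = P.eval (lam i) := by
        rw [hP, eval_prod]; simp [hc]
      set Q : ℂ[X] := P - C c with hQ
      have hdvd : (X - C (lam i)) ∣ Q := by
        rw [hQ, hceval]
        exact X_sub_C_dvd_sub_C_eval
      have heq : Q = (X - C (lam i)) * (Q /ₘ (X - C (lam i))) := by
        conv_lhs => rw [← modByMonic_add_div Q (X - C (lam i))]
        rw [(modByMonic_eq_zero_iff_dvd (monic_X_sub_C (lam i))).mpr hdvd, zero_add]
      have hQdeg : Q.natDegree = m := by rw [hQ, natDegree_sub_C, hPdeg]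
      have hQmonic : Q.Monic := by
        rw [Monic, leadingCoeff, hQdeg, hQ, coeff_sub, coeff_C, if_neg (by omega), sub_zero,
          ← hPdeg, hPmonic.coeff_natDegree]
      have hhmonic : (Q /ₘ (X - C (lam i))).Monic :=
        (monic_X_sub_C (lam i)).of_mul_monic_left (heq ▸ hQmonic)
      have hhdeg : (Q /ₘ (X - C (lam i))).natDegree = m - 1 := by
        have := (monic_X_sub_C (lam i)).natDegree_mul hhmonic
        rw [← heq, hQdeg, natDegree_X_sub_C] at this
        omega
      exact coeff_of_monic' hhmonic _ n hhdeg (by omega)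
    rw [Finset.sum_congr rfl key1, Finset.sum_congr rfl key2]
    by_cases hcase : n = m - 1
    · have hmeq : m = g + 1 := by omega
      simp only [if_pos hcase, Finset.sum_const, nsmul_eq_mul, mul_one]
      rw [sub_eq_zero]
      norm_cast
      omega
    · simp [hcase]
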